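/- Let d ≥ 1, σ > 0, q ∈ (0, 1], r ≥ 0, a ∈ ℝ, and u₁, u₂ ∈ ℝ^d with ‖u₁ − u₂‖₂ ≤ r. Let Y′ be the mixture measure on ℝ^d with density (1 − q)·φ_{u₁,σ,d} + q·φ_{u₂,σ,d}, and let W be the one-dimensional mixture with density (1 − q)·φ_{0,σ,1} + q·φ_{r,σ,1}. Then TV_a( N(u₁, σ²I_d), Y′ ) ≤ TV_a( N(0, σ²), W ); that is, a single subsampled Gaussian step is no more distinguishable under TV_a than the worst-case one-dimensional subsampled Gaussian step at distance r. -/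

import Mathlib

open MeasureTheory Set

/-- `TV_a(X, Y) = (1/2) ∫ |f(x) − a·g(x)| dx` for densities `f, g`. -/
noncomputable def TVa {E : Type*} [MeasureSpace E] (a : ℝ) (f g : E → ℝ) : ℝ :=
  (1 / 2) * ∫ x, |f x - a * g x|

/-- Density of the isotropic Gaussian `N(u, σ²I_d)` on `ℝ^d`. -/
noncomputable def gaussDensity (d : ℕ) (σ : ℝ) (u : EuclideanSpace ℝ (Fin d))
    (x : EuclideanSpace ℝ (Fin d)) : ℝ :=
  (2 * Real.pi * σ ^ 2) ^ (-(d : ℝ) / 2) * Real.exp (-‖x - u‖ ^ 2 / (2 * σ ^ 2))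

/-- Density of the one-dimensional Gaussian `N(u, σ²)` on `ℝ`. -/
noncomputable def gauss1 (σ u : ℝ) (x : ℝ) : ℝ :=
  (2 * Real.pi * σ ^ 2) ^ (-(1 : ℝ) / 2) * Real.exp (-(x - u) ^ 2 / (2 * σ ^ 2))

variable {σ : ℝ}

lemma gauss1_pos (hσ : 0 < σ) (u x : ℝ) : 0 < gauss1 σ u x := by
  unfold gauss1
  positivity

lemma gauss1_eq (u x : ℝ) :
    gauss1 σ u x = (2 * Real.pi * σ ^ 2) ^ (-(1 : ℝ) / 2)
      * Real.exp (-(1 / (2 * σ ^ 2)) * (x - u) ^ 2) := by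
  unfold gauss1
  ring_nf

lemma integrable_gauss1 (hσ : 0 < σ) (u : ℝ) : Integrable (gauss1 σ u) := by
  have hb : (0:ℝ) < 1 / (2 * σ ^ 2) := by positivity
  have h := ((integrable_exp_neg_mul_sq hb).comp_sub_right u).const_mul
    ((2 * Real.pi * σ ^ 2) ^ (-(1 : ℝ) / 2))
  refine h.congr (Filter.Eventually.of_forall fun x => ?_)
  rw [gauss1_eq]

lemma integral_gauss1 (hσ : 0 < σ) (u : ℝ) : ∫ x, gauss1 σ u x = 1 := by
  have hb : (0:ℝ) < 1 / (2 * σ ^ 2) := by positivity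
  have h1 : ∫ x, gauss1 σ u x = (2 * Real.pi * σ ^ 2) ^ (-(1 : ℝ) / 2)
      * ∫ x, Real.exp (-(1 / (2 * σ ^ 2)) * (x - u) ^ 2) := by
    simp_rw [gauss1_eq]
    rw [integral_const_mul]
  rw [h1, integral_sub_right_eq_self (μ := volume)
    (fun x => Real.exp (-(1 / (2 * σ ^ 2)) * x ^ 2)) u, integral_gaussian]
  have hA : (0:ℝ) < 2 * Real.pi * σ ^ 2 := by positivity
  have h2 : Real.pi / (1 / (2 * σ ^ 2)) = 2 * Real.pi * σ ^ 2 := by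
    field_simp
  rw [h2, show (-(1:ℝ)/2) = -(1/2) by norm_num, Real.rpow_neg hA.le, ← Real.sqrt_eq_rpow]
  rw [inv_mul_cancel₀ (Real.sqrt_pos.2 hA).ne']

lemma gauss1_shift (u x : ℝ) : gauss1 σ u x = gauss1 σ 0 (x - u) := by
  unfold gauss1; rw [sub_zero]

lemma setIntegral_gauss1_shift (c u : ℝ) :
    ∫ x in Ici c, gauss1 σ u x = ∫ x in Ici (c - u), gauss1 σ 0 x := by
  rw [← integral_indicator measurableSet_Ici, ← integral_indicator measurableSet_Ici]
  rw [← integral_sub_right_eq_self (fun x => indicator (Ici (c-u)) (gauss1 σ 0) x) u]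
  congr 1
  ext x
  by_cases h : c ≤ x
  · rw [indicator_of_mem (show x ∈ Ici c from h), indicator_of_mem (show x - u ∈ Ici (c-u) by simpa using h),
      ← gauss1_shift]
  · rw [indicator_of_notMem (show x ∉ Ici c from h),
      indicator_of_notMem (show x - u ∉ Ici (c-u) by simpa using h)]

lemma tail_mono (hσ : 0 < σ) (c : ℝ) {t r : ℝ} (htr : t ≤ r) :
    ∫ x in Ici c, gauss1 σ t x ≤ ∫ x in Ici c, gauss1 σ r x := by
  rw [setIntegral_gauss1_shift c t, setIntegral_gauss1_shift c r]
  apply setIntegral_mono_set ((integrable_gauss1 hσ 0).integrableOn)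
  · exact Filter.Eventually.of_forall fun x => (gauss1_pos hσ 0 x).le
  · exact HasSubset.Subset.eventuallyLE (Ici_subset_Ici.2 (by linarith))

lemma integrable_diff (hσ : 0 < σ) (α β u : ℝ) :
    Integrable (fun x => α * gauss1 σ 0 x - β * gauss1 σ u x) :=
  ((integrable_gauss1 hσ 0).const_mul α).sub ((integrable_gauss1 hσ u).const_mul β)

lemma integral_diff (hσ : 0 < σ) (α β u : ℝ) :
    ∫ x, (α * gauss1 σ 0 x - β * gauss1 σ u x) = α - β := by
  rw [integral_sub ((integrable_gauss1 hσ 0).const_mul α) ((integrable_gauss1 hσ u).const_mul β),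
    integral_const_mul, integral_const_mul, integral_gauss1 hσ, integral_gauss1 hσ]
  ring

lemma abs_decomp (hσ : 0 < σ) (α β u : ℝ) :
    ∫ x, |α * gauss1 σ 0 x - β * gauss1 σ u x|
      = (α - β) + 2 * ∫ x, max (β * gauss1 σ u x - α * gauss1 σ 0 x) 0 := by
  have hpt : ∀ x : ℝ, |α * gauss1 σ 0 x - β * gauss1 σ u x|
      = (α * gauss1 σ 0 x - β * gauss1 σ u x)
        + 2 * max (β * gauss1 σ u x - α * gauss1 σ 0 x) 0 := by
    intro x
    rcases le_total (β * gauss1 σ u x) (α * gauss1 σ 0 x) with h | h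
    · rw [abs_of_nonneg (by linarith), max_eq_right (by linarith)]; ring
    · rw [abs_of_nonpos (by linarith), max_eq_left (by linarith)]; ring
  simp_rw [hpt]
  rw [integral_add (integrable_diff hσ α β u)
    (((integrable_diff hσ α β u).neg.congr
      (Filter.Eventually.of_forall fun x => by simp)).pos_part.const_mul 2),
    integral_const_mul, integral_diff hσ]

lemma threshold_iff (hσ : 0 < σ) {α β t : ℝ} (hα : 0 < α) (hβ : 0 < β) (ht : 0 < t) (x : ℝ) :
    0 ≤ β * gauss1 σ t x - α * gauss1 σ 0 x
      ↔ σ ^ 2 * Real.log (α / β) / t + t / 2 ≤ x := by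
  have hσ2 : (0:ℝ) < σ ^ 2 := by positivity
  have hC : (0:ℝ) < (2 * Real.pi * σ ^ 2) ^ (-(1 : ℝ) / 2) := by positivity
  rw [sub_nonneg]
  unfold gauss1
  rw [show α * ((2 * Real.pi * σ ^ 2) ^ (-(1:ℝ) / 2) * Real.exp (-(x - 0) ^ 2 / (2 * σ ^ 2)))
      = ((2 * Real.pi * σ ^ 2) ^ (-(1:ℝ) / 2)) * (α * Real.exp (-(x - 0) ^ 2 / (2 * σ ^ 2)))
      by ring,
    show β * ((2 * Real.pi * σ ^ 2) ^ (-(1:ℝ) / 2) * Real.exp (-(x - t) ^ 2 / (2 * σ ^ 2)))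
      = ((2 * Real.pi * σ ^ 2) ^ (-(1:ℝ) / 2)) * (β * Real.exp (-(x - t) ^ 2 / (2 * σ ^ 2)))
      by ring,
    mul_le_mul_iff_right₀ hC]
  conv_lhs => rw [← Real.exp_log hα, ← Real.exp_log hβ, ← Real.exp_add, ← Real.exp_add]
  rw [Real.exp_le_exp, Real.log_div hα.ne' hβ.ne']
  rw [div_add_div _ _ (ne_of_gt ht) (two_ne_zero), div_le_iff₀ (by positivity)]
  have hs : (0:ℝ) < 2 * σ ^ 2 := by positivity
  have esub : (x - 0) ^ 2 / (2 * σ ^ 2) - (x - t) ^ 2 / (2 * σ ^ 2)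
      = ((x - 0) ^ 2 - (x - t) ^ 2) / (2 * σ ^ 2) := (sub_div _ _ _).symm
  constructor
  · intro h
    have h2 : Real.log α - Real.log β
        ≤ (x - 0) ^ 2 / (2 * σ ^ 2) - (x - t) ^ 2 / (2 * σ ^ 2) := by
      simp only [neg_div] at h; linarith
    rw [esub, le_div_iff₀ hs] at h2
    nlinarith [h2]
  · intro h
    have h3 : (Real.log α - Real.log β) * (2 * σ ^ 2) ≤ (x - 0) ^ 2 - (x - t) ^ 2 := by
      nlinarith [h]
    rw [← le_div_iff₀ hs, ← esub] at h3
    simp only [neg_div]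
    linarith

lemma J_mono (hσ : 0 < σ) {α β t r : ℝ} (hα : 0 < α) (hβ : 0 < β) (ht : 0 ≤ t) (htr : t ≤ r) :
    ∫ x, max (β * gauss1 σ t x - α * gauss1 σ 0 x) 0
      ≤ ∫ x, max (β * gauss1 σ r x - α * gauss1 σ 0 x) 0 := by
  have hint : ∀ u : ℝ, Integrable (fun x => β * gauss1 σ u x - α * gauss1 σ 0 x) :=
    fun u => ((integrable_gauss1 hσ u).const_mul β).sub ((integrable_gauss1 hσ 0).const_mul α)
  have hmax : ∀ u : ℝ, Integrable (fun x => max (β * gauss1 σ u x - α * gauss1 σ 0 x) 0) :=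
    fun u => (hint u).pos_part
  rcases eq_or_lt_of_le ht with rfl | ht'
  · -- t = 0
    have h0 : ∀ x, max (β * gauss1 σ 0 x - α * gauss1 σ 0 x) 0
        = max (β - α) 0 * gauss1 σ 0 x := by
      intro x
      rw [show β * gauss1 σ 0 x - α * gauss1 σ 0 x = (β - α) * gauss1 σ 0 x by ring,
        max_mul_of_nonneg _ _ (gauss1_pos hσ 0 x).le, zero_mul]
    simp_rw [h0]
    rw [integral_const_mul, integral_gauss1 hσ, mul_one]
    rcases le_total (β - α) 0 with h | h
    · rw [max_eq_right h]
      exact integral_nonneg fun x => le_max_right _ _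
    · rw [max_eq_left h]
      calc β - α = ∫ x, (β * gauss1 σ r x - α * gauss1 σ 0 x) := by
            rw [integral_sub ((integrable_gauss1 hσ r).const_mul β)
              ((integrable_gauss1 hσ 0).const_mul α), integral_const_mul, integral_const_mul,
              integral_gauss1 hσ, integral_gauss1 hσ]; ring
        _ ≤ _ := integral_mono (hint r) (hmax r) fun x => le_max_left _ _
  · -- 0 < t
    set c := σ ^ 2 * Real.log (α / β) / t + t / 2 with hc
    have hJt : ∫ x, max (β * gauss1 σ t x - α * gauss1 σ 0 x) 0
        = ∫ x in Ici c, (β * gauss1 σ t x - α * gauss1 σ 0 x) := by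
      rw [← integral_indicator measurableSet_Ici]
      congr 1
      ext x
      by_cases h : c ≤ x
      · rw [indicator_of_mem (show x ∈ Ici c from h),
          max_eq_left ((threshold_iff hσ hα hβ ht' x).2 h)]
      · rw [indicator_of_notMem (show x ∉ Ici c from h), max_eq_right]
        have := (threshold_iff hσ hα hβ ht' x).not.2 h  -- not needed direction?
        by_contra hcon
        push_neg at hcon
        exact h ((threshold_iff hσ hα hβ ht' x).1 (by linarith))
    have hJr : ∫ x in Ici c, (β * gauss1 σ r x - α * gauss1 σ 0 x)
        ≤ ∫ x, max (β * gauss1 σ r x - α * gauss1 σ 0 x) 0 := by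
      rw [← integral_indicator measurableSet_Ici]
      refine integral_mono ((hint r).integrableOn.integrable_indicator measurableSet_Ici)
        (hmax r) fun x => ?_
      by_cases h : x ∈ Ici c
      · rw [indicator_of_mem h]; exact le_max_left _ _
      · rw [indicator_of_notMem h]; exact le_max_right _ _
    rw [hJt]
    refine le_trans ?_ hJr
    rw [integral_sub ((integrable_gauss1 hσ t).const_mul β).integrableOn
        ((integrable_gauss1 hσ 0).const_mul α).integrableOn,
      integral_sub ((integrable_gauss1 hσ r).const_mul β).integrableOn
        ((integrable_gauss1 hσ 0).const_mul α).integrableOn]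
    apply sub_le_sub_right
    rw [integral_const_mul, integral_const_mul]
    exact mul_le_mul_of_nonneg_left (tail_mono hσ c htr) hβ.le

lemma oneD (hσ : 0 < σ) (α β : ℝ) {t r : ℝ} (ht : 0 ≤ t) (htr : t ≤ r) :
    ∫ x, |α * gauss1 σ 0 x - β * gauss1 σ t x|
      ≤ ∫ x, |α * gauss1 σ 0 x - β * gauss1 σ r x| := by
  by_cases hpos : 0 < α * β
  · rcases mul_pos_iff.1 hpos with ⟨hα, hβ⟩ | ⟨hα, hβ⟩
    · rw [abs_decomp hσ, abs_decomp hσ]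
      have := J_mono hσ hα hβ ht htr
      linarith
    · have eq1 : ∀ u : ℝ, ∫ x, |α * gauss1 σ 0 x - β * gauss1 σ u x|
          = ∫ x, |(-α) * gauss1 σ 0 x - (-β) * gauss1 σ u x| := by
        intro u
        refine integral_congr_ae (Filter.Eventually.of_forall fun x => ?_)
        show |α * gauss1 σ 0 x - β * gauss1 σ u x| = |(-α) * gauss1 σ 0 x - (-β) * gauss1 σ u x|
        rw [show (-α) * gauss1 σ 0 x - (-β) * gauss1 σ u x
            = -(α * gauss1 σ 0 x - β * gauss1 σ u x) by ring, abs_neg]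
      rw [eq1 t, eq1 r, abs_decomp hσ, abs_decomp hσ]
      have := J_mono hσ (neg_pos.2 hα) (neg_pos.2 hβ) ht htr
      linarith
  · push_neg at hpos
    have e : ∀ u x, |α * gauss1 σ 0 x - β * gauss1 σ u x|
        = |α| * gauss1 σ 0 x + |β| * gauss1 σ u x := by
      intro u x
      have h0 := gauss1_pos hσ 0 x
      have hu := gauss1_pos hσ u x
      rcases mul_nonpos_iff.1 hpos with ⟨hα, hβ⟩ | ⟨hα, hβ⟩
      · rw [abs_of_nonneg hα, abs_of_nonpos hβ,
          abs_of_nonneg (by nlinarith : (0:ℝ) ≤ α * gauss1 σ 0 x - β * gauss1 σ u x)]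
        ring
      · rw [abs_of_nonpos hα, abs_of_nonneg hβ,
          abs_of_nonpos (by nlinarith : α * gauss1 σ 0 x - β * gauss1 σ u x ≤ 0)]
        ring
    have ev : ∀ u : ℝ, ∫ x, |α * gauss1 σ 0 x - β * gauss1 σ u x| = |α| + |β| := by
      intro u
      calc ∫ x, |α * gauss1 σ 0 x - β * gauss1 σ u x|
          = ∫ x, (|α| * gauss1 σ 0 x + |β| * gauss1 σ u x) :=
            integral_congr_ae (Filter.Eventually.of_forall fun x => by
              simpa using e u x)
        _ = |α| + |β| := by
            rw [integral_add ((integrable_gauss1 hσ 0).const_mul _)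
              ((integrable_gauss1 hσ u).const_mul _), integral_const_mul, integral_const_mul,
              integral_gauss1 hσ, integral_gauss1 hσ, mul_one, mul_one]
    rw [ev t, ev r]

lemma gaussDensity_prod (d : ℕ) (hσ : 0 < σ) (u x : EuclideanSpace ℝ (Fin d)) :
    gaussDensity d σ u x = ∏ i, gauss1 σ (u i) (x i) := by
  have hA : (0:ℝ) < 2 * Real.pi * σ ^ 2 := by positivity
  have hC : (2 * Real.pi * σ ^ 2) ^ (-(d : ℝ) / 2)
      = ((2 * Real.pi * σ ^ 2) ^ (-(1:ℝ) / 2)) ^ d := by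
    rw [← Real.rpow_natCast ((2 * Real.pi * σ ^ 2) ^ (-(1:ℝ)/2)) d, ← Real.rpow_mul hA.le]
    congr 1
    push_cast
    ring
  have hnorm : ‖x - u‖ ^ 2 = ∑ i, (x i - u i) ^ 2 := by
    rw [EuclideanSpace.norm_eq, Real.sq_sqrt (by positivity)]
    refine Finset.sum_congr rfl fun i _ => ?_
    rw [show (x - u) i = x i - u i from rfl, Real.norm_eq_abs, sq_abs]
  have hdiv : -‖x - u‖ ^ 2 / (2 * σ ^ 2) = ∑ i, (-(x i - u i) ^ 2 / (2 * σ ^ 2)) := by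
    rw [hnorm]
    rw [← Finset.sum_neg_distrib, Finset.sum_div]
  unfold gaussDensity gauss1
  rw [hC, hdiv, Real.exp_sum, show ((2 * Real.pi * σ ^ 2) ^ (-(1:ℝ)/2)) ^ d
    = ∏ _i : Fin d, (2 * Real.pi * σ ^ 2) ^ (-(1:ℝ)/2) by
      rw [Finset.prod_const, Finset.card_univ, Fintype.card_fin],
    ← Finset.prod_mul_distrib]

lemma gaussDensity_add (d : ℕ) (u v x : EuclideanSpace ℝ (Fin d)) :
    gaussDensity d σ u (x + v) = gaussDensity d σ (u - v) x := by
  unfold gaussDensity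
  congr 2
  rw [show x + v - u = x - (u - v) by abel]

lemma dim_red (d : ℕ) (hd : 1 ≤ d) (hσ : 0 < σ) (α β : ℝ)
    (u₁ u₂ : EuclideanSpace ℝ (Fin d)) :
    ∫ x, |α * gaussDensity d σ u₁ x - β * gaussDensity d σ u₂ x|
      = ∫ y : ℝ, |α * gauss1 σ 0 y - β * gauss1 σ ‖u₂ - u₁‖ y| := by
  set v : EuclideanSpace ℝ (Fin d) := u₂ - u₁ with hv
  set t : ℝ := ‖v‖ with htdef
  have i0 : Fin d := ⟨0, hd⟩
  set w : EuclideanSpace ℝ (Fin d) := t • EuclideanSpace.single i0 1 with hw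
  have hwnorm : ‖w‖ = ‖v‖ := by
    rw [hw, norm_smul, EuclideanSpace.norm_single, norm_one, mul_one, htdef,
      Real.norm_eq_abs, abs_norm]
  -- Step 1: translate by u₁
  have step1 : ∫ x, |α * gaussDensity d σ u₁ x - β * gaussDensity d σ u₂ x|
      = ∫ x, |α * gaussDensity d σ 0 x - β * gaussDensity d σ v x| := by
    rw [← integral_add_right_eq_self
      (fun x => |α * gaussDensity d σ u₁ x - β * gaussDensity d σ u₂ x|) u₁]
    refine integral_congr_ae (Filter.Eventually.of_forall fun x => ?_)
    simp only [gaussDensity_add, sub_self, hv]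
  -- Step 2: rotate w to v
  have step2 : ∫ x, |α * gaussDensity d σ 0 x - β * gaussDensity d σ v x|
      = ∫ x, |α * gaussDensity d σ 0 x - β * gaussDensity d σ w x| := by
    set O := Submodule.reflection (ℝ ∙ (w - v))ᗮ with hO
    have hOw : O w = v := Submodule.reflection_sub hwnorm
    rw [← O.measurePreserving.integral_comp O.toHomeomorph.measurableEmbedding
      (fun x => |α * gaussDensity d σ 0 x - β * gaussDensity d σ v x|)]
    refine integral_congr_ae (Filter.Eventually.of_forall fun x => ?_)
    have e1 : gaussDensity d σ 0 x = gaussDensity d σ 0 (O x) := by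
      unfold gaussDensity
      rw [sub_zero, sub_zero, O.norm_map]
    have e2 : gaussDensity d σ w x = gaussDensity d σ v (O x) := by
      unfold gaussDensity
      rw [← hOw, ← map_sub, O.norm_map]
    show |α * gaussDensity d σ 0 (O x) - β * gaussDensity d σ v (O x)|
      = |α * gaussDensity d σ 0 x - β * gaussDensity d σ w x|
    rw [← e1, ← e2]
  rw [step1, step2]
  -- Step 3: move to the pi space and use Fubini
  set k : Fin d → ℝ → ℝ := fun i =>
    if i = i0 then (fun z => |α * gauss1 σ 0 z - β * gauss1 σ t z|) else gauss1 σ 0 with hk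
  have step3 : ∫ x, |α * gaussDensity d σ 0 x - β * gaussDensity d σ w x|
      = ∫ y : Fin d → ℝ, ∏ i, k i (y i) := by
    rw [← ((EuclideanSpace.volume_preserving_symm_measurableEquiv_toLp (Fin d)).symm
        _).integral_comp
      (MeasurableEquiv.measurableEmbedding _)
      (fun x => |α * gaussDensity d σ 0 x - β * gaussDensity d σ w x|)]
    refine integral_congr_ae (Filter.Eventually.of_forall fun y => ?_)
    show |α * gaussDensity d σ 0 _ - β * gaussDensity d σ w _| = ∏ i, k i (y i)
    set x : EuclideanSpace ℝ (Fin d) := (MeasurableEquiv.toLp 2 (Fin d → ℝ)).symm.symm y with hx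
    have hxy : ∀ i, x i = y i := fun i => rfl
    have hmem : i0 ∈ Finset.univ := Finset.mem_univ i0
    have hP : (0:ℝ) ≤ ∏ i ∈ Finset.univ.erase i0, gauss1 σ 0 (x i) :=
      Finset.prod_nonneg fun i _ => (gauss1_pos hσ 0 (x i)).le
    rw [gaussDensity_prod d hσ, gaussDensity_prod d hσ]
    rw [← Finset.mul_prod_erase _ _ hmem, ← Finset.mul_prod_erase _ (fun i => gauss1 σ (w i) (x i)) hmem,
      ← Finset.mul_prod_erase _ (fun i => k i (y i)) hmem]
    have hw0 : ∀ i ∈ Finset.univ.erase i0, gauss1 σ (w i) (x i) = gauss1 σ 0 (x i) := by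
      intro i hi
      have : w i = 0 := by
        rw [hw]
        show t * (EuclideanSpace.single i0 (1:ℝ)) i = 0
        rw [EuclideanSpace.single_apply, if_neg (Finset.mem_erase.1 hi).1, mul_zero]
      rw [this]
    have hzero : ∀ i, (0:EuclideanSpace ℝ (Fin d)) i = 0 := fun i => rfl
    have hwi0 : w i0 = t := by
      rw [hw]
      show t * (EuclideanSpace.single i0 (1:ℝ)) i0 = t
      rw [EuclideanSpace.single_apply, if_pos rfl, mul_one]
    have hki0 : k i0 = fun z => |α * gauss1 σ 0 z - β * gauss1 σ t z| := by
      rw [hk]; simp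
    have hkerase : ∀ i ∈ Finset.univ.erase i0, k i (y i) = gauss1 σ 0 (x i) := by
      intro i hi
      rw [hk]
      simp only [if_neg (Finset.mem_erase.1 hi).1]
      rw [hxy]
    rw [Finset.prod_congr rfl hw0, Finset.prod_congr rfl hkerase, hki0, hwi0]
    simp only [hzero]
    rw [hxy i0]
    show |α * (gauss1 σ 0 (y i0) * ∏ i ∈ Finset.univ.erase i0, gauss1 σ 0 (x i))
        - β * (gauss1 σ t (y i0) * ∏ i ∈ Finset.univ.erase i0, gauss1 σ 0 (x i))|
      = |α * gauss1 σ 0 (y i0) - β * gauss1 σ t (y i0)|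
        * ∏ i ∈ Finset.univ.erase i0, gauss1 σ 0 (x i)
    rw [show α * (gauss1 σ 0 (y i0) * ∏ i ∈ Finset.univ.erase i0, gauss1 σ 0 (x i))
        - β * (gauss1 σ t (y i0) * ∏ i ∈ Finset.univ.erase i0, gauss1 σ 0 (x i))
      = (α * gauss1 σ 0 (y i0) - β * gauss1 σ t (y i0))
        * ∏ i ∈ Finset.univ.erase i0, gauss1 σ 0 (x i) by ring, abs_mul, abs_of_nonneg hP]
  rw [step3, MeasureTheory.integral_fintype_prod_volume_eq_prod (ι := Fin d) k,
    ← Finset.mul_prod_erase _ _ (Finset.mem_univ i0)]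
  have h1 : ∀ i ∈ Finset.univ.erase i0, (∫ z, k i z) = 1 := by
    intro i hi
    rw [hk]
    simp only [if_neg (Finset.mem_erase.1 hi).1]
    exact integral_gauss1 hσ 0
  have hki0 : k i0 = fun z => |α * gauss1 σ 0 z - β * gauss1 σ t z| := by
    rw [hk]; simp
  rw [Finset.prod_congr rfl h1, Finset.prod_const_one, mul_one, hki0]

/-- A single subsampled Gaussian step is no more distinguishable under `TV_a` than the
worst-case one-dimensional subsampled Gaussian step at distance `r`. -/
theorem tva_subsampled_step_le (d : ℕ) (hd : 1 ≤ d) (σ q r a : ℝ) (hσ : 0 < σ)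
    (hq : q ∈ Set.Ioc (0 : ℝ) 1) (hr : 0 ≤ r)
    (u₁ u₂ : EuclideanSpace ℝ (Fin d)) (hu : ‖u₁ - u₂‖ ≤ r) :
    TVa a (gaussDensity d σ u₁)
        (fun x => (1 - q) * gaussDensity d σ u₁ x + q * gaussDensity d σ u₂ x)
      ≤ TVa a (gauss1 σ 0) (fun x => (1 - q) * gauss1 σ 0 x + q * gauss1 σ r x) := by
  unfold TVa
  have h2 : (0:ℝ) ≤ 1 / 2 := by norm_num
  refine mul_le_mul_of_nonneg_left ?_ h2
  have eL : ∀ x : EuclideanSpace ℝ (Fin d),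
      gaussDensity d σ u₁ x
        - a * ((1 - q) * gaussDensity d σ u₁ x + q * gaussDensity d σ u₂ x)
      = (1 - a * (1 - q)) * gaussDensity d σ u₁ x - (a * q) * gaussDensity d σ u₂ x :=
    fun x => by ring
  have eR : ∀ y : ℝ,
      gauss1 σ 0 y - a * ((1 - q) * gauss1 σ 0 y + q * gauss1 σ r y)
      = (1 - a * (1 - q)) * gauss1 σ 0 y - (a * q) * gauss1 σ r y := fun y => by ring
  simp_rw [eL, eR]
  rw [dim_red d hd hσ (1 - a * (1 - q)) (a * q) u₁ u₂]
  exact oneD hσ _ _ (norm_nonneg _) (by rw [norm_sub_rev]; exact hu)
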